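/- Assume G_s and G_i are invertible. Let S ⊆ ℝ^{n_x} × ℝ^{n_u} × ℝ × ℝ^{n_x} × ℝ^{n_u} × ℝ^{n_x} be the subspace of tuples w = (Δx_i, Δu_i, Δt, Δx_s, Δu_s, Δx') satisfying the homogeneous constraints A_i Δx_i + B_i Δu_i − Δx_s + f_i Δt = 0 and A_s Δx_s + B_s Δu_s − Δx' − f_s Δt = 0. If the quadratic form q(w) = Δx_iᵀ Q_{xx,i} Δx_i + 2 Δx_iᵀ Q_{xu,i} Δu_i + Δu_iᵀ Q_{uu,i} Δu_i + 2 Δt (h_{x,i}ᵀ Δx_i + h_{u,i}ᵀ Δu_i) − 2 Δt (h_{x,s}ᵀ Δx_s + h_{u,s}ᵀ Δu_s) + Δx_sᵀ Q_{xx,s} Δx_s + 2 Δx_sᵀ Q_{xu,s} Δu_s + Δu_sᵀ Q_{uu,s} Δu_s + Δx'ᵀ P' Δx' satisfies q(w) > 0 for every nonzero w ∈ S, then the symmetric (n_x+1)×(n_x+1) block matrix [[F_i − K_iᵀ G_i K_i, Γ_i], [Γ_iᵀ, ξ̃_s]] is positive definite. (Positive definiteness of the reduced quadratic form in (Δx_i,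 Δt) obtained by eliminating the other variables via the Riccati recursion.) -/

import Mathlib

open Matrix

section Helpers
variable {m n : ℕ}

lemma dot_shift (A : Matrix (Fin m) (Fin n) ℝ) (v : Fin m → ℝ) (w : Fin n → ℝ) :
    v ⬝ᵥ (A *ᵥ w) = (Aᵀ *ᵥ v) ⬝ᵥ w := by
  rw [dotProduct_mulVec, Matrix.mulVec_transpose]

lemma complete_square {m : ℕ} {G : Matrix (Fin m) (Fin m) ℝ} (hG : IsUnit G)
    (c u : Fin m → ℝ) (hu : u = -(G⁻¹ *ᵥ c)) :
    u ⬝ᵥ (G *ᵥ u) + 2 * (c ⬝ᵥ u) = -(c ⬝ᵥ (G⁻¹ *ᵥ c)) := by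
  have hdet : IsUnit G.det := (Matrix.isUnit_iff_isUnit_det G).mp hG
  have h1 : G *ᵥ u = -c := by
    rw [hu, Matrix.mulVec_neg, Matrix.mulVec_mulVec, Matrix.mul_nonsing_inv G hdet,
      Matrix.one_mulVec]
  rw [h1, hu]
  simp only [dotProduct_neg, neg_dotProduct, neg_neg]
  rw [dotProduct_comm (G⁻¹ *ᵥ c) c]
  ring

lemma sandwich_symm {m n : ℕ} (K : Matrix (Fin m) (Fin n) ℝ) (G : Matrix (Fin m) (Fin m) ℝ)
    (hG : Gᵀ = G) : (Kᵀ * G * K)ᵀ = Kᵀ * G * K := by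
  rw [Matrix.transpose_mul, Matrix.transpose_mul, Matrix.transpose_transpose, hG,
    Matrix.mul_assoc]

end Helpers

lemma riccati_step {n m : ℕ}
    (Qxx P : Matrix (Fin n) (Fin n) ℝ) (Quu : Matrix (Fin m) (Fin m) ℝ)
    (Qxu : Matrix (Fin n) (Fin m) ℝ)
    (A : Matrix (Fin n) (Fin n) ℝ) (B : Matrix (Fin n) (Fin m) ℝ)
    (hx f γ : Fin n → ℝ) (hu : Fin m → ℝ) (ξ0 : ℝ)
    (hP : Pᵀ = P) (hQuu : Quuᵀ = Quu)
    (F : Matrix (Fin n) (Fin n) ℝ) (hF : F = Qxx + Aᵀ * P * A)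
    (H : Matrix (Fin n) (Fin m) ℝ) (hH : H = Qxu + Aᵀ * P * B)
    (G : Matrix (Fin m) (Fin m) ℝ) (hG : G = Quu + Bᵀ * P * B)
    (hGu : IsUnit G)
    (K : Matrix (Fin m) (Fin n) ℝ) (hK : K = -(G⁻¹ * Hᵀ))
    (ψx : Fin n → ℝ) (hψx : ψx = hx + Aᵀ *ᵥ (P *ᵥ f) + Aᵀ *ᵥ γ)
    (ψu : Fin m → ℝ) (hψu : ψu = hu + Bᵀ *ᵥ (P *ᵥ f) + Bᵀ *ᵥ γ)
    (x : Fin n → ℝ) (t : ℝ)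
    (u : Fin m → ℝ) (hu' : u = K *ᵥ x - t • (G⁻¹ *ᵥ ψu))
    (x' : Fin n → ℝ) (hx' : x' = A *ᵥ x + B *ᵥ u + t • f) :
    x ⬝ᵥ (Qxx *ᵥ x) + 2 * (x ⬝ᵥ (Qxu *ᵥ u)) + u ⬝ᵥ (Quu *ᵥ u)
      + 2 * t * (hx ⬝ᵥ x + hu ⬝ᵥ u)
      + (x' ⬝ᵥ (P *ᵥ x') + 2 * t * (γ ⬝ᵥ x') + t ^ 2 * ξ0)
    = x ⬝ᵥ ((F - Kᵀ * G * K) *ᵥ x) + 2 * t * ((ψx + Kᵀ *ᵥ ψu) ⬝ᵥ x)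
      + t ^ 2 * (f ⬝ᵥ (P *ᵥ f) + 2 * (γ ⬝ᵥ f) + ξ0 - ψu ⬝ᵥ (G⁻¹ *ᵥ ψu)) := by
  have hdet : IsUnit G.det := (Matrix.isUnit_iff_isUnit_det G).mp hGu
  have hG' : Gᵀ = G := by
    rw [hG]
    simp only [Matrix.transpose_add, Matrix.transpose_mul, Matrix.transpose_transpose, hP, hQuu,
      Matrix.mul_assoc]
  have hGi' : G⁻¹ᵀ = G⁻¹ := by rw [Matrix.transpose_nonsing_inv, hG']
  have hKGK : Kᵀ * G * K = H * G⁻¹ * Hᵀ := by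
    rw [hK, Matrix.transpose_neg, Matrix.transpose_mul, Matrix.transpose_transpose, hGi',
      Matrix.neg_mul, Matrix.mul_neg, Matrix.neg_mul, neg_neg,
      Matrix.mul_assoc H G⁻¹ G, Matrix.nonsing_inv_mul G hdet, Matrix.mul_one,
      ← Matrix.mul_assoc]
  have hKψ : Kᵀ *ᵥ ψu = -(H *ᵥ (G⁻¹ *ᵥ ψu)) := by
    rw [hK, Matrix.transpose_neg, Matrix.transpose_mul, Matrix.transpose_transpose, hGi',
      Matrix.neg_mulVec, ← Matrix.mulVec_mulVec]
  have hcu : u = -(G⁻¹ *ᵥ (Hᵀ *ᵥ x + t • ψu)) := by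
    rw [hu', hK]
    simp only [Matrix.mulVec_add, Matrix.mulVec_smul, Matrix.neg_mulVec, Matrix.mulVec_mulVec]
    module
  have hCS := complete_square hGu (Hᵀ *ᵥ x + t • ψu) u hcu
  have stepA : x ⬝ᵥ (Qxx *ᵥ x) + 2 * (x ⬝ᵥ (Qxu *ᵥ u)) + u ⬝ᵥ (Quu *ᵥ u)
      + 2 * t * (hx ⬝ᵥ x + hu ⬝ᵥ u)
      + ((A *ᵥ x + B *ᵥ u + t • f) ⬝ᵥ (P *ᵥ (A *ᵥ x + B *ᵥ u + t • f))
        + 2 * t * (γ ⬝ᵥ (A *ᵥ x + B *ᵥ u + t • f)) + t ^ 2 * ξ0)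
      = x ⬝ᵥ (F *ᵥ x) + (u ⬝ᵥ (G *ᵥ u) + 2 * ((Hᵀ *ᵥ x + t • ψu) ⬝ᵥ u))
        + 2 * t * (ψx ⬝ᵥ x) + t ^ 2 * (f ⬝ᵥ (P *ᵥ f) + 2 * (γ ⬝ᵥ f) + ξ0) := by
    simp only [hF, hH, hG, hψx, hψu, Matrix.add_mulVec, Matrix.mulVec_add, Matrix.mulVec_smul,
      ← Matrix.mulVec_mulVec, dotProduct_add, add_dotProduct, dotProduct_smul, smul_dotProduct,
      smul_eq_mul, Matrix.transpose_add, Matrix.transpose_mul, Matrix.transpose_transpose,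
      hP, hQuu, dot_shift]
    have c1 : P *ᵥ (A *ᵥ x) ⬝ᵥ f = Aᵀ *ᵥ (P *ᵥ f) ⬝ᵥ x := by
      rw [dotProduct_comm]
      simp only [dot_shift, Matrix.transpose_transpose, hP]
    have c2 : P *ᵥ (B *ᵥ u) ⬝ᵥ f = Bᵀ *ᵥ (P *ᵥ f) ⬝ᵥ u := by
      rw [dotProduct_comm]
      simp only [dot_shift, Matrix.transpose_transpose, hP]
    have c3 : Aᵀ *ᵥ (P *ᵥ (B *ᵥ u)) ⬝ᵥ x = Bᵀ *ᵥ (P *ᵥ (A *ᵥ x)) ⬝ᵥ u := by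
      rw [dotProduct_comm]
      simp only [dot_shift, Matrix.transpose_transpose, hP]
    linear_combination t * c1 + t * c2 + c3
  have stepC : -((Hᵀ *ᵥ x + t • ψu) ⬝ᵥ (G⁻¹ *ᵥ (Hᵀ *ᵥ x + t • ψu)))
      = -(x ⬝ᵥ ((Kᵀ * G * K) *ᵥ x)) + 2 * t * ((Kᵀ *ᵥ ψu) ⬝ᵥ x)
        - t ^ 2 * (ψu ⬝ᵥ (G⁻¹ *ᵥ ψu)) := by
    rw [hKGK, hKψ]
    simp only [Matrix.mulVec_add, Matrix.mulVec_smul, ← Matrix.mulVec_mulVec, dotProduct_add,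
      add_dotProduct, dotProduct_smul, smul_dotProduct, smul_eq_mul, neg_dotProduct,
      dotProduct_neg, Matrix.transpose_transpose, hGi', dot_shift]
    have c4 : G⁻¹ *ᵥ (Hᵀ *ᵥ x) ⬝ᵥ ψu = H *ᵥ (G⁻¹ *ᵥ ψu) ⬝ᵥ x := by
      rw [dotProduct_comm]
      simp only [dot_shift, Matrix.transpose_transpose, hGi']
    linear_combination (-t) * c4
  rw [hx', stepA, hCS, stepC]
  simp only [Matrix.sub_mulVec, dotProduct_sub, add_dotProduct]
  ring


/-- Positive definiteness of the reduced quadratic form in `(Δx_i, Δt)` obtained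
by eliminating the other variables via the Riccati recursion: under the
second-order sufficient condition (Assumption 3.1), the block matrix
`[[F_i − K_iᵀ G_i K_i, Γ_i], [Γ_iᵀ, ξ̃_s]]` is positive definite. -/
theorem reduced_hessian_posdef {nx nu : ℕ}
    (Qxxs P' : Matrix (Fin nx) (Fin nx) ℝ)
    (Quus : Matrix (Fin nu) (Fin nu) ℝ)
    (Qxus : Matrix (Fin nx) (Fin nu) ℝ)
    (As : Matrix (Fin nx) (Fin nx) ℝ) (Bs : Matrix (Fin nx) (Fin nu) ℝ)
    (hxs fs : Fin nx → ℝ) (hus : Fin nu → ℝ)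
    (Qxxi : Matrix (Fin nx) (Fin nx) ℝ)
    (Quui : Matrix (Fin nu) (Fin nu) ℝ)
    (Qxui : Matrix (Fin nx) (Fin nu) ℝ)
    (Ai : Matrix (Fin nx) (Fin nx) ℝ) (Bi : Matrix (Fin nx) (Fin nu) ℝ)
    (hxi fi : Fin nx → ℝ) (hui : Fin nu → ℝ)
    (hQxxsSymm : Qxxs.IsSymm) (hQuusSymm : Quus.IsSymm) (hP'Symm : P'.IsSymm)
    (hQxxiSymm : Qxxi.IsSymm) (hQuuiSymm : Quui.IsSymm)
    (Fs : Matrix (Fin nx) (Fin nx) ℝ) (hFs : Fs = Qxxs + Asᵀ * P' * As)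
    (Hs : Matrix (Fin nx) (Fin nu) ℝ) (hHs : Hs = Qxus + Asᵀ * P' * Bs)
    (Gs : Matrix (Fin nu) (Fin nu) ℝ) (hGs : Gs = Quus + Bsᵀ * P' * Bs)
    (hGsinv : IsUnit Gs)
    (Ks : Matrix (Fin nu) (Fin nx) ℝ) (hKs : Ks = -(Gs⁻¹ * Hsᵀ))
    (Ps : Matrix (Fin nx) (Fin nx) ℝ) (hPs : Ps = Fs - Ksᵀ * Gs * Ks)
    (ψxs : Fin nx → ℝ) (hψxs : ψxs = hxs + Asᵀ *ᵥ (P' *ᵥ fs))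
    (ψus : Fin nu → ℝ) (hψus : ψus = hus + Bsᵀ *ᵥ (P' *ᵥ fs))
    (Γs : Fin nx → ℝ) (hΓs : Γs = ψxs + Ksᵀ *ᵥ ψus)
    (ξs : ℝ) (hξs : ξs = fs ⬝ᵥ (P' *ᵥ fs) - ψus ⬝ᵥ (Gs⁻¹ *ᵥ ψus))
    (Fi : Matrix (Fin nx) (Fin nx) ℝ) (hFi : Fi = Qxxi + Aiᵀ * Ps * Ai)
    (Gi : Matrix (Fin nu) (Fin nu) ℝ) (hGi : Gi = Quui + Biᵀ * Ps * Bi)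
    (hGiinv : IsUnit Gi)
    (Ki : Matrix (Fin nu) (Fin nx) ℝ) (hKi : Ki = -(Gi⁻¹ * (Qxui + Aiᵀ * Ps * Bi)ᵀ))
    (ψxi : Fin nx → ℝ) (hψxi : ψxi = hxi + Aiᵀ *ᵥ (Ps *ᵥ fi) - Aiᵀ *ᵥ Γs)
    (ψui : Fin nu → ℝ) (hψui : ψui = hui + Biᵀ *ᵥ (Ps *ᵥ fi) - Biᵀ *ᵥ Γs)
    (Γi : Fin nx → ℝ) (hΓi : Γi = ψxi + Kiᵀ *ᵥ ψui)
    (ξts : ℝ) (hξts : ξts = ξs - 2 * (Γs ⬝ᵥ fi) + fi ⬝ᵥ (Ps *ᵥ fi) - ψui ⬝ᵥ (Gi⁻¹ *ᵥ ψui))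
    (hSOSC : ∀ (dxi : Fin nx → ℝ) (dui : Fin nu → ℝ) (dt : ℝ)
        (dxs : Fin nx → ℝ) (dus : Fin nu → ℝ) (dx' : Fin nx → ℝ),
      Ai *ᵥ dxi + Bi *ᵥ dui - dxs + dt • fi = 0 →
      As *ᵥ dxs + Bs *ᵥ dus - dx' - dt • fs = 0 →
      ¬(dxi = 0 ∧ dui = 0 ∧ dt = 0 ∧ dxs = 0 ∧ dus = 0 ∧ dx' = 0) →
      0 < dxi ⬝ᵥ (Qxxi *ᵥ dxi) + 2 * (dxi ⬝ᵥ (Qxui *ᵥ dui)) + dui ⬝ᵥ (Quui *ᵥ dui)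
        + 2 * dt * (hxi ⬝ᵥ dxi + hui ⬝ᵥ dui) - 2 * dt * (hxs ⬝ᵥ dxs + hus ⬝ᵥ dus)
        + dxs ⬝ᵥ (Qxxs *ᵥ dxs) + 2 * (dxs ⬝ᵥ (Qxus *ᵥ dus)) + dus ⬝ᵥ (Quus *ᵥ dus)
        + dx' ⬝ᵥ (P' *ᵥ dx')) :
    (fromBlocks (Fi - Kiᵀ * Gi * Ki) (replicateCol (Fin 1) Γi) (replicateRow (Fin 1) Γi) !![ξts]).PosDef := by
  have hP'T : P'ᵀ = P' := hP'Symm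
  have hQuusT : Quusᵀ = Quus := hQuusSymm
  have hQxxsT : Qxxsᵀ = Qxxs := hQxxsSymm
  have hQuuiT : Quuiᵀ = Quui := hQuuiSymm
  have hQxxiT : Qxxiᵀ = Qxxi := hQxxiSymm
  have hGsT : Gsᵀ = Gs := by
    rw [hGs]
    simp only [Matrix.transpose_add, Matrix.transpose_mul, Matrix.transpose_transpose, hP'T,
      hQuusT, Matrix.mul_assoc]
  have hFsT : Fsᵀ = Fs := by
    rw [hFs]
    simp only [Matrix.transpose_add, Matrix.transpose_mul, Matrix.transpose_transpose, hP'T,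
      hQxxsT, Matrix.mul_assoc]
  have hPsT : Psᵀ = Ps := by
    rw [hPs, Matrix.transpose_sub, hFsT, sandwich_symm Ks Gs hGsT]
  have hGiT : Giᵀ = Gi := by
    rw [hGi]
    simp only [Matrix.transpose_add, Matrix.transpose_mul, Matrix.transpose_transpose, hPsT,
      hQuuiT, Matrix.mul_assoc]
  have hFiT : Fiᵀ = Fi := by
    rw [hFi]
    simp only [Matrix.transpose_add, Matrix.transpose_mul, Matrix.transpose_transpose, hPsT,
      hQxxiT, Matrix.mul_assoc]
  have hM11 : (Fi - Kiᵀ * Gi * Ki)ᵀ = Fi - Kiᵀ * Gi * Ki := by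
    rw [Matrix.transpose_sub, hFiT, sandwich_symm Ki Gi hGiT]
  rw [Matrix.posDef_iff_dotProduct_mulVec]
  constructor
  · rw [Matrix.IsHermitian, Matrix.conjTranspose_eq_transpose_of_trivial,
      Matrix.fromBlocks_transpose, Matrix.transpose_replicateCol, Matrix.transpose_replicateRow, hM11]
    have hD : !![ξts]ᵀ = !![ξts] := by
      ext i j
      fin_cases i <;> fin_cases j <;> rfl
    rw [hD]
  · intro x hx
    have hstar : star x = x := funext fun i => star_trivial (x i)
    rw [hstar]
    obtain ⟨dxi, hdxi⟩ : ∃ v, v = x ∘ Sum.inl := ⟨_, rfl⟩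
    obtain ⟨dt, hdt⟩ : ∃ v, v = x (Sum.inr 0) := ⟨_, rfl⟩
    obtain ⟨dui, hdui⟩ : ∃ v, v = Ki *ᵥ dxi - dt • (Gi⁻¹ *ᵥ ψui) := ⟨_, rfl⟩
    obtain ⟨dxs, hdxs⟩ : ∃ v, v = Ai *ᵥ dxi + Bi *ᵥ dui + dt • fi := ⟨_, rfl⟩
    obtain ⟨dus, hdus⟩ : ∃ v, v = Ks *ᵥ dxs + dt • (Gs⁻¹ *ᵥ ψus) := ⟨_, rfl⟩
    obtain ⟨dx', hdx'⟩ : ∃ v, v = As *ᵥ dxs + Bs *ᵥ dus + dt • (-fs) := ⟨_, rfl⟩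
    have h1 : Ai *ᵥ dxi + Bi *ᵥ dui - dxs + dt • fi = 0 := by
      rw [hdxs]; module
    have h2 : As *ᵥ dxs + Bs *ᵥ dus - dx' - dt • fs = 0 := by
      rw [hdx']; module
    have hne : ¬(dxi = 0 ∧ dui = 0 ∧ dt = 0 ∧ dxs = 0 ∧ dus = 0 ∧ dx' = 0) := by
      rintro ⟨e1, -, e3, -, -, -⟩
      apply hx
      funext p
      cases p with
      | inl i =>
        rw [hdxi] at e1
        exact congrFun e1 i
      | inr j =>
        rw [Fin.eq_zero j, ← hdt]
        exact e3
    have hq := hSOSC dxi dui dt dxs dus dx' h1 h2 hne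
    -- s-stage Riccati identity
    have hψxs_neg : -ψxs = -hxs + Asᵀ *ᵥ (P' *ᵥ (-fs)) + Asᵀ *ᵥ (0 : Fin nx → ℝ) := by
      rw [hψxs]
      simp [Matrix.mulVec_neg, Matrix.mulVec_zero, neg_add]
      abel
    have hψus_neg : -ψus = -hus + Bsᵀ *ᵥ (P' *ᵥ (-fs)) + Bsᵀ *ᵥ (0 : Fin nx → ℝ) := by
      rw [hψus]
      simp [Matrix.mulVec_neg, Matrix.mulVec_zero, neg_add]
      abel
    have hdus' : dus = Ks *ᵥ dxs - dt • (Gs⁻¹ *ᵥ (-ψus)) := by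
      rw [hdus]
      simp [Matrix.mulVec_neg, smul_neg, sub_neg_eq_add]
    have hs := riccati_step Qxxs P' Quus Qxus As Bs (-hxs) (-fs) (0 : Fin nx → ℝ) (-hus) (0 : ℝ)
      hP'T hQuusT Fs hFs Hs hHs Gs hGs hGsinv Ks hKs (-ψxs) hψxs_neg (-ψus) hψus_neg
      dxs dt dus hdus' dx' hdx'
    -- i-stage Riccati identity
    have hψxi' : ψxi = hxi + Aiᵀ *ᵥ (Ps *ᵥ fi) + Aiᵀ *ᵥ (-Γs) := by
      rw [hψxi]
      simp [Matrix.mulVec_neg, sub_eq_add_neg]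
    have hψui' : ψui = hui + Biᵀ *ᵥ (Ps *ᵥ fi) + Biᵀ *ᵥ (-Γs) := by
      rw [hψui]
      simp [Matrix.mulVec_neg, sub_eq_add_neg]
    have hi := riccati_step Qxxi Ps Quui Qxui Ai Bi hxi fi (-Γs) hui ξs
      hPsT hQuuiT Fi hFi (Qxui + Aiᵀ * Ps * Bi) rfl Gi hGi hGiinv Ki hKi ψxi hψxi' ψui hψui'
      dxi dt dui hdui dxs hdxs
    -- quadratic form of the block matrix
    have hb : x ∘ Sum.inr = fun _ : Fin 1 => dt := by
      funext j
      rw [Fin.eq_zero j, hdt]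
      rfl
    have hquad : x ⬝ᵥ (fromBlocks (Fi - Kiᵀ * Gi * Ki) (replicateCol (Fin 1) Γi) (replicateRow (Fin 1) Γi)
        !![ξts] *ᵥ x)
        = dxi ⬝ᵥ ((Fi - Kiᵀ * Gi * Ki) *ᵥ dxi) + 2 * dt * (Γi ⬝ᵥ dxi) + dt ^ 2 * ξts := by
      conv_lhs => rw [← Sum.elim_comp_inl_inr x]
      rw [Matrix.fromBlocks_mulVec]
      simp only [Sum.elim_comp_inl, Sum.elim_comp_inr]
      rw [sumElim_dotProduct_sumElim, hb, ← hdxi]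
      have hcol : Matrix.replicateCol (Fin 1) Γi *ᵥ (fun _ : Fin 1 => dt) = dt • Γi := by
        ext i
        simp [Matrix.mulVec, dotProduct, mul_comm]
      have hrow : Matrix.replicateRow (Fin 1) Γi *ᵥ dxi = fun _ : Fin 1 => Γi ⬝ᵥ dxi :=
        Matrix.replicateRow_mulVec_eq_const Γi dxi
      have hdd : !![ξts] *ᵥ (fun _ : Fin 1 => dt) = fun _ : Fin 1 => ξts * dt := by
        funext j
        fin_cases j
        simp [Matrix.mulVec, dotProduct]
      rw [hcol, hrow, hdd]
      have fin1_dot : ∀ a b : Fin 1 → ℝ, a ⬝ᵥ b = a 0 * b 0 := fun a b => by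
        simp [dotProduct]
      simp only [dotProduct_add, dotProduct_smul, smul_eq_mul, fin1_dot, Pi.add_apply]
      linear_combination dt * dotProduct_comm dxi Γi
    refine lt_of_lt_of_eq hq ?_
    rw [hquad, hΓi, hξts]
    rw [← hPs] at hs
    have cΓ : Γs ⬝ᵥ dxs = ψxs ⬝ᵥ dxs + Ksᵀ *ᵥ ψus ⬝ᵥ dxs := by
      rw [hΓs, add_dotProduct]
    simp only [Matrix.mulVec_neg, Matrix.mulVec_zero, neg_dotProduct, dotProduct_neg,
      zero_dotProduct, dotProduct_zero, neg_neg, mul_zero, add_zero, zero_add,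
      add_dotProduct] at hs hi
    have cΓi : (ψxi + Kiᵀ *ᵥ ψui) ⬝ᵥ dxi = ψxi ⬝ᵥ dxi + Kiᵀ *ᵥ ψui ⬝ᵥ dxi :=
      add_dotProduct _ _ _
    linear_combination hs + hi - dt ^ 2 * hξs + 2 * dt * cΓ - 2 * dt * cΓi
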